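/- Let σ : ℝ → ℝ be continuous and not equal to any polynomial. Then for every compact set Ω ⊂ ℝⁿ, every continuous function f : Ω → ℝⁿ, and every ε > 0, there exist N ∈ ℕ, matrices A_j, W_j ∈ ℝ^{n×n} and vectors b_j ∈ ℝⁿ for j = 0,…,N−1 such that the function g(x) := Σ_{j=0}^{N−1} A_j σ(W_j x + b_j) satisfies sup_{x ∈ Ω} ‖f(x) − g(x)‖ ≤ ε. -/

import Mathlib

open Matrix

/-- Euclidean norm of a finitely-indexed real vector. -/
noncomputable def euclNorm {m : Type*} [Fintype m] (v : m → ℝ) : ℝ :=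
  Real.sqrt (∑ i, v i ^ 2)

/-- Entrywise application of a scalar function to a vector. -/
def entApp {m : Type*} (σ : ℝ → ℝ) (v : m → ℝ) : m → ℝ := fun i => σ (v i)

open MeasureTheory Convolution Finset Function

noncomputable section UAPAux



variable {n : ℕ}

/-- sum of a shallow network given by a list of (coeff, weight, bias). -/
def NetSum (σ : ℝ → ℝ) (L : List (ℝ × (Fin n → ℝ) × ℝ)) (x : Fin n → ℝ) : ℝ :=
  (L.map fun t => t.1 * σ (t.2.1 ⬝ᵥ x + t.2.2)).sum

def Approx (σ : ℝ → ℝ) (Ω : Set (Fin n → ℝ)) (g : (Fin n → ℝ) → ℝ) : Prop :=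
  ∀ ε > 0, ∃ L : List (ℝ × (Fin n → ℝ) × ℝ), ∀ x ∈ Ω, |g x - NetSum σ L x| ≤ ε

theorem NetSum_append (σ : ℝ → ℝ) (L₁ L₂ : List (ℝ × (Fin n → ℝ) × ℝ)) (x) :
    NetSum σ (L₁ ++ L₂) x = NetSum σ L₁ x + NetSum σ L₂ x := by
  simp [NetSum]

theorem NetSum_smul (σ : ℝ → ℝ) (c : ℝ) (L : List (ℝ × (Fin n → ℝ) × ℝ)) (x) :
    NetSum σ (L.map fun t => (c * t.1, t.2)) x = c * NetSum σ L x := by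
  induction L with
  | nil => simp [NetSum]
  | cons a L ih => simp [NetSum, List.map_cons, List.sum_cons, mul_add] at ih ⊢; rw [ih]; ring

theorem approx_gen (σ : ℝ → ℝ) (Ω : Set (Fin n → ℝ)) (w : Fin n → ℝ) (b : ℝ) :
    Approx σ Ω (fun x => σ (w ⬝ᵥ x + b)) := by
  intro ε hε
  exact ⟨[(1, w, b)], fun x _ => by simp [NetSum]; positivity⟩

theorem approx_add {σ : ℝ → ℝ} {Ω : Set (Fin n → ℝ)} {g₁ g₂ : (Fin n → ℝ) → ℝ}
    (h₁ : Approx σ Ω g₁) (h₂ : Approx σ Ω g₂) : Approx σ Ω (fun x => g₁ x + g₂ x) := by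
  intro ε hε
  obtain ⟨L₁, hL₁⟩ := h₁ (ε/2) (by positivity)
  obtain ⟨L₂, hL₂⟩ := h₂ (ε/2) (by positivity)
  refine ⟨L₁ ++ L₂, fun x hx => ?_⟩
  rw [NetSum_append]
  calc |g₁ x + g₂ x - (NetSum σ L₁ x + NetSum σ L₂ x)|
      = |(g₁ x - NetSum σ L₁ x) + (g₂ x - NetSum σ L₂ x)| := by ring_nf
    _ ≤ |g₁ x - NetSum σ L₁ x| + |g₂ x - NetSum σ L₂ x| := abs_add_le _ _
    _ ≤ ε/2 + ε/2 := add_le_add (hL₁ x hx) (hL₂ x hx)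
    _ = ε := by ring

theorem approx_smul {σ : ℝ → ℝ} {Ω : Set (Fin n → ℝ)} {g : (Fin n → ℝ) → ℝ}
    (c : ℝ) (h : Approx σ Ω g) : Approx σ Ω (fun x => c * g x) := by
  intro ε hε
  obtain ⟨L, hL⟩ := h (ε / (|c| + 1)) (by positivity)
  refine ⟨L.map fun t => (c * t.1, t.2), fun x hx => ?_⟩
  rw [NetSum_smul, ← mul_sub, abs_mul]
  calc |c| * |g x - NetSum σ L x| ≤ |c| * (ε / (|c| + 1)) :=
        mul_le_mul_of_nonneg_left (hL x hx) (abs_nonneg c)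
    _ ≤ ε := by
        have h1 : |c| / (|c|+1) ≤ 1 := by
          rw [div_le_one (by positivity)]; linarith [abs_nonneg c]
        calc |c| * (ε / (|c|+1)) = (|c|/(|c|+1)) * ε := by ring
          _ ≤ 1 * ε := mul_le_mul_of_nonneg_right h1 hε.le
          _ = ε := one_mul ε

theorem approx_of_close {σ : ℝ → ℝ} {Ω : Set (Fin n → ℝ)} {g : (Fin n → ℝ) → ℝ}
    (h : ∀ η > (0:ℝ), ∃ g', Approx σ Ω g' ∧ ∀ x ∈ Ω, |g x - g' x| ≤ η) :
    Approx σ Ω g := by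
  intro ε hε
  obtain ⟨g', hg', hclose⟩ := h (ε/2) (by positivity)
  obtain ⟨L, hL⟩ := hg' (ε/2) (by positivity)
  refine ⟨L, fun x hx => ?_⟩
  calc |g x - NetSum σ L x| = |(g x - g' x) + (g' x - NetSum σ L x)| := by ring_nf
    _ ≤ |g x - g' x| + |g' x - NetSum σ L x| := abs_add_le _ _
    _ ≤ ε/2 + ε/2 := add_le_add (hclose x hx) (hL x hx)
    _ = ε := by ring

theorem approx_congr {σ : ℝ → ℝ} {Ω : Set (Fin n → ℝ)} {g₁ g₂ : (Fin n → ℝ) → ℝ}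
    (h : Approx σ Ω g₁) (he : ∀ x ∈ Ω, g₁ x = g₂ x) : Approx σ Ω g₂ := by
  intro ε hε
  obtain ⟨L, hL⟩ := h ε hε
  exact ⟨L, fun x hx => (he x hx) ▸ hL x hx⟩

theorem approx_const {σ : ℝ → ℝ} {Ω : Set (Fin n → ℝ)} {g : (Fin n → ℝ) → ℝ} : True := trivial



theorem poly_of_iteratedDeriv_zero : ∀ (k : ℕ) (f : ℝ → ℝ), ContDiff ℝ (⊤:ℕ∞) f →
    (∀ x, iteratedDeriv k f x = 0) → ∃ c : ℕ → ℝ, ∀ x, f x = ∑ i ∈ range k, c i * x ^ i := by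
  intro k
  induction k with
  | zero =>
    intro f _ h
    exact ⟨fun _ => 0, fun x => by simpa using h x⟩
  | succ k ih =>
    intro f hf h
    have hdf : ContDiff ℝ (⊤:ℕ∞) (deriv f) := (contDiff_infty_iff_deriv.mp hf).2
    have h' : ∀ x, iteratedDeriv k (deriv f) x = 0 := by
      intro x
      have := h x
      rwa [iteratedDeriv_succ'] at this
    obtain ⟨c, hc⟩ := ih (deriv f) hdf h'
    set F : ℝ → ℝ := fun x => ∑ i ∈ range k, c i / (i+1) * x ^ (i+1) with hF
    have hFd : ∀ x, HasDerivAt F (deriv f x) x := by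
      intro x
      rw [hc]
      have : HasDerivAt F (∑ i ∈ range k, c i / (i+1) * ((i+1) * x ^ i)) x := by
        apply HasDerivAt.fun_sum
        intro i _
        simpa using (hasDerivAt_pow (i+1) x).const_mul (c i / (i+1))
      convert this using 1
      apply Finset.sum_congr rfl
      intro i _
      have hne : (i:ℝ)+1 ≠ 0 := by positivity
      field_simp
    have hconst : ∀ x, f x - F x = f 0 - F 0 := by
      intro x
      have hd : ∀ y, deriv (fun z => f z - F z) y = 0 := by
        intro y
        have h1 : HasDerivAt (fun z => f z - F z) (deriv f y - deriv f y) y :=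
          (hf.differentiable (by simp) y).hasDerivAt.sub (hFd y)
        simpa using h1.deriv
      exact is_const_of_deriv_eq_zero
        (fun y => ((hf.differentiable (by simp) y).hasDerivAt.sub (hFd y)).differentiableAt)
        hd x 0
    refine ⟨fun i => if i = 0 then f 0 - F 0 else c (i-1) / i, fun x => ?_⟩
    have hx : f x = (f 0 - F 0) + F x := by linarith [hconst x]
    rw [hx, Finset.sum_range_succ']
    simp only [hF]
    rw [add_comm]
    congr 1
    · apply Finset.sum_congr rfl
      intro i _
      simp
    · simp


variable (σ : ℝ → ℝ)

/-- mollification of `σ` by a normalized bump. -/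
def convB (φ : ContDiffBump (0:ℝ)) : ℝ → ℝ :=
  (φ.normed volume) ⋆[ContinuousLinearMap.lsmul ℝ ℝ, volume] σ

theorem convB_contDiff (hσc : Continuous σ) (φ : ContDiffBump (0:ℝ)) :
    ContDiff ℝ (⊤:ℕ∞) (convB σ φ) :=
  HasCompactSupport.contDiff_convolution_left _ φ.hasCompactSupport_normed
    φ.contDiff_normed (hσc.locallyIntegrable)

theorem convB_eq (φ : ContDiffBump (0:ℝ)) (t : ℝ) :
    convB σ φ t = ∫ s, φ.normed volume s * σ (t - s) := by
  simp [convB, convolution_def, ContinuousLinearMap.lsmul_apply, smul_eq_mul]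

theorem convB_close (hσc : Continuous σ) {R ε : ℝ} (hR : 0 < R) (hε : 0 < ε) :
    ∃ φ : ContDiffBump (0:ℝ), ∀ t ∈ Set.Icc (-R) R, |convB σ φ t - σ t| ≤ ε := by
  have hK : IsCompact (Set.Icc (-(R+1)) (R+1)) := isCompact_Icc
  have huc := hK.uniformContinuousOn_of_continuous hσc.continuousOn
  rw [Metric.uniformContinuousOn_iff] at huc
  obtain ⟨δ, hδ, hd⟩ := huc ε hε
  set r : ℝ := min δ 1 with hr
  have hr0 : 0 < r := lt_min hδ one_pos
  refine ⟨⟨r/2, r, by positivity, by linarith⟩, fun t ht => ?_⟩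
  set φ : ContDiffBump (0:ℝ) := ⟨r/2, r, by positivity, by linarith⟩
  set φn := φ.normed volume with hφn
  have hInt1 : Integrable (fun s => φn s * σ (t - s)) volume := by
    apply Continuous.integrable_of_hasCompactSupport
    · exact φ.continuous_normed.mul (hσc.comp (continuous_const.sub continuous_id))
    · exact φ.hasCompactSupport_normed.mul_right
  have hInt2 : Integrable (fun s => φn s * σ t) volume := φ.integrable_normed.mul_const _
  have key : convB σ φ t - σ t = ∫ s, φn s * (σ (t - s) - σ t) := by
    rw [convB_eq]
    have : (∫ s, φn s * (σ (t-s) - σ t)) = (∫ s, φn s * σ (t-s)) - ∫ s, φn s * σ t := by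
      rw [← integral_sub hInt1 hInt2]
      congr 1; funext s; ring
    rw [this]
    have h1 : (∫ s, φn s * σ t) = σ t := by
      rw [integral_mul_const, φ.integral_normed, one_mul]
    rw [h1]
  rw [key]
  have hb : ∀ s, ‖φn s * (σ (t-s) - σ t)‖ ≤ ε * φn s := by
    intro s
    by_cases hs : φn s = 0
    · simp [hs]
    · have hsupp : s ∈ Function.support φn := hs
      rw [φ.support_normed_eq] at hsupp
      have hsr : |s| < r := by simpa [Real.dist_eq] using Metric.mem_ball.mp hsupp
      have hs1 : |s| ≤ 1 := le_of_lt (lt_of_lt_of_le hsr (min_le_right _ _))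
      obtain ⟨hsa, hsb⟩ := abs_le.mp hs1
      have h1 : t - s ∈ Set.Icc (-(R+1)) (R+1) := by
        constructor <;> [linarith [ht.1]; linarith [ht.2]]
      have h2 : t ∈ Set.Icc (-(R+1)) (R+1) := by
        constructor <;> [linarith [ht.1]; linarith [ht.2]]
      have h3 : dist (t - s) t < δ := by
        have : dist (t - s) t = |s| := by rw [Real.dist_eq]; ring_nf; exact abs_neg s ▸ rfl
        rw [this]; exact lt_of_lt_of_le hsr (min_le_left _ _)
      have h4 : |σ (t - s) - σ t| ≤ ε := le_of_lt (by simpa [Real.dist_eq] using hd _ h1 _ h2 h3)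
      have h5 : 0 ≤ φn s := φ.nonneg_normed s
      calc ‖φn s * (σ (t-s) - σ t)‖ = φn s * |σ (t-s) - σ t| := by
            rw [norm_mul, Real.norm_eq_abs, Real.norm_eq_abs, abs_of_nonneg h5]
        _ ≤ φn s * ε := mul_le_mul_of_nonneg_left h4 h5
        _ = ε * φn s := mul_comm _ _
  calc |∫ s, φn s * (σ (t-s) - σ t)| ≤ ∫ s, ε * φn s :=
        norm_integral_le_of_norm_le (φ.integrable_normed.const_mul ε) (Filter.Eventually.of_forall hb)
    _ = ε := by rw [integral_const_mul, φ.integral_normed, mul_one]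

theorem list_range_sum (m : ℕ) (f : ℕ → ℝ) :
    ((List.range m).map f).sum = ∑ i ∈ range m, f i := by
  induction m with
  | zero => simp
  | succ m ih => rw [List.range_succ, Finset.sum_range_succ, List.map_append, List.sum_append, ih]; simp

theorem exists_coord_bound {n : ℕ} {Ω : Set (Fin n → ℝ)} (hΩ : IsCompact Ω) :
    ∃ C ≥ (0:ℝ), ∀ x ∈ Ω, ∀ i, |x i| ≤ C := by
  obtain ⟨r, hr⟩ := hΩ.isBounded.subset_closedBall 0
  refine ⟨max r 0, le_max_right _ _, fun x hx i => ?_⟩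
  have : ‖x‖ ≤ r := by simpa using hr hx
  have h2 : |x i| ≤ ‖x‖ := by
    rw [← Real.norm_eq_abs]
    exact norm_le_pi_norm x i
  exact le_trans (h2.trans this) (le_max_left _ _)

theorem dot_bound {n : ℕ} {C : ℝ} (v x : Fin n → ℝ) (hx : ∀ i, |x i| ≤ C) (hC : 0 ≤ C) :
    |v ⬝ᵥ x| ≤ (∑ i, |v i|) * C := by
  calc |v ⬝ᵥ x| ≤ ∑ i, |v i * x i| := Finset.abs_sum_le_sum_abs _ _
    _ ≤ ∑ i, |v i| * C := by
        apply Finset.sum_le_sum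
        intro i _
        rw [abs_mul]
        exact mul_le_mul_of_nonneg_left (hx i) (abs_nonneg _)
    _ = (∑ i, |v i|) * C := by rw [← Finset.sum_mul]

theorem approx_convB {n : ℕ} {Ω : Set (Fin n → ℝ)} (hσc : Continuous σ) (hΩ : IsCompact Ω)
    (φ : ContDiffBump (0:ℝ)) (w : Fin n → ℝ) (b : ℝ) :
    Approx σ Ω (fun x => convB σ φ (w ⬝ᵥ x + b)) := by
  intro ε hε
  obtain ⟨C, hC0, hC⟩ := exists_coord_bound hΩ
  set R : ℝ := (∑ i, |w i|) * C + |b| with hR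
  have hR0 : 0 ≤ R := by positivity
  have htmem : ∀ x ∈ Ω, w ⬝ᵥ x + b ∈ Set.Icc (-R) R := by
    intro x hx
    have := dot_bound w x (hC x hx) hC0
    obtain ⟨h1, h2⟩ := abs_le.mp this
    constructor <;> [linarith [neg_abs_le b]; linarith [le_abs_self b]]
  set M : ℝ := φ.rOut with hM
  have hM0 : 0 < M := φ.rOut_pos
  set φn := φ.normed volume with hφn
  set G : ℝ × ℝ → ℝ := fun p => φn p.2 * σ (p.1 - p.2) with hG
  have hGc : Continuous G :=
    (φ.continuous_normed.comp continuous_snd).mul (hσc.comp (continuous_fst.sub continuous_snd))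
  set K : Set (ℝ × ℝ) := Set.Icc (-R) R ×ˢ Set.Icc (-M) M with hK
  have hKc : IsCompact K := isCompact_Icc.prod isCompact_Icc
  have huc := hKc.uniformContinuousOn_of_continuous hGc.continuousOn
  rw [Metric.uniformContinuousOn_iff] at huc
  set ε' : ℝ := ε / (2*M + 1) with hε'
  have hε'0 : 0 < ε' := by positivity
  obtain ⟨δ, hδ0, hδ⟩ := huc ε' hε'0
  obtain ⟨m, hm⟩ := exists_nat_gt (2*M/δ)
  have hm0 : 0 < (m:ℝ) := lt_of_le_of_lt (by positivity) hm
  have hmn0 : m ≠ 0 := by exact_mod_cast hm0.ne'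
  set step : ℝ := 2*M/m with hstep
  have hstep0 : 0 < step := by positivity
  have hstepδ : step < δ := by
    rw [hstep, div_lt_iff₀ hm0]
    rw [div_lt_iff₀ hδ0] at hm
    nlinarith
  set a : ℕ → ℝ := fun i => -M + i * step with ha
  have ha0 : a 0 = -M := by simp [ha]
  have ham : a m = M := by
    simp only [ha, hstep]
    field_simp
    ring
  have hastep : ∀ i, a (i+1) - a i = step := by
    intro i; simp [ha]; ring
  refine ⟨(List.range m).map fun i => (step * φn (a i), w, b - a i), fun x hx => ?_⟩
  set t : ℝ := w ⬝ᵥ x + b with hture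
  have htK : t ∈ Set.Icc (-R) R := htmem x hx
  have hNet : NetSum σ ((List.range m).map fun i => (step * φn (a i), w, b - a i)) x
      = ∑ i ∈ range m, step * G (t, a i) := by
    rw [NetSum, List.map_map]
    rw [list_range_sum m]
    apply Finset.sum_congr rfl
    intro i _
    simp only [Function.comp, hG]
    have : w ⬝ᵥ x + (b - a i) = t - a i := by rw [hture]; ring
    rw [this]
    ring
  rw [hNet]
  -- the integral as a sum of interval integrals
  have hfc : Continuous (fun s => φn s * σ (t - s)) :=
    φ.continuous_normed.mul (hσc.comp (continuous_const.sub continuous_id))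
  have hint : convB σ φ t = ∫ s in (-M)..M, φn s * σ (t - s) := by
    rw [convB_eq]
    rw [intervalIntegral.integral_eq_integral_of_support_subset]
    intro s hs
    have : φn s ≠ 0 := by
      intro h0
      apply hs
      simp [h0]
    have : s ∈ Function.support φn := this
    rw [hφn, φ.support_normed_eq] at this
    have : |s| < M := by simpa [Real.dist_eq] using Metric.mem_ball.mp this
    obtain ⟨h1, h2⟩ := abs_lt.mp this
    exact ⟨h1, h2.le⟩
  have hii : ∀ k, IntervalIntegrable (fun s => φn s * σ (t - s)) volume (a k) (a (k+1)) :=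
    fun k => hfc.intervalIntegrable _ _
  have hsplit : (∑ k ∈ range m, ∫ s in (a k)..(a (k+1)), φn s * σ (t-s)) =
      ∫ s in (-M)..M, φn s * σ (t - s) := by
    have := intervalIntegral.sum_integral_adjacent_intervals (a := a) (n := m)
      (fun k _ => hii k)
    rw [ha0, ham] at this
    exact this
  have hbeta : (fun x => convB σ φ (w ⬝ᵥ x + b)) x = convB σ φ t := rfl
  rw [hbeta, hint, ← hsplit, ← Finset.sum_sub_distrib]
  have hbound : ∀ k ∈ range m, |(∫ s in (a k)..(a (k+1)), φn s * σ (t-s)) - step * G (t, a k)| ≤ step * ε' := by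
    intro k hk
    have hkm : k + 1 ≤ m := Finset.mem_range.mp hk
    have hak_mem : ∀ s, s ∈ Set.Icc (a k) (a (k+1)) → s ∈ Set.Icc (-M) M := by
      intro s hs
      have h1 : -M ≤ a k := by
        have h0 : (0:ℝ) ≤ k * step := by positivity
        show -M ≤ -M + ↑k * step
        linarith
      have h2 : a (k+1) ≤ M := by
        rw [← ham]
        show -M + ((k+1:ℕ):ℝ) * step ≤ -M + (m:ℝ) * step
        have hle : ((k+1:ℕ):ℝ) ≤ (m:ℝ) := by exact_mod_cast hkm
        nlinarith [hstep0.le]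
      exact ⟨le_trans h1 hs.1, le_trans hs.2 h2⟩
    have hconst : step * G (t, a k) = ∫ s in (a k)..(a (k+1)), G (t, a k) := by
      rw [intervalIntegral.integral_const, hastep, smul_eq_mul]
    rw [hconst, ← intervalIntegral.integral_sub (hii k) (intervalIntegrable_const)]
    have : |∫ s in (a k)..(a (k+1)), (φn s * σ (t-s) - G (t, a k))| ≤ ε' * |a (k+1) - a k| := by
      rw [← Real.norm_eq_abs]
      apply intervalIntegral.norm_integral_le_of_norm_le_const
      intro s hs
      have hak : a k < a (k+1) := by rw [← sub_pos, hastep]; exact hstep0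
      rw [Set.uIoc_of_le hak.le] at hs
      have hsIcc : s ∈ Set.Icc (a k) (a (k+1)) := ⟨hs.1.le, hs.2⟩
      have hsM : s ∈ Set.Icc (-M) M := hak_mem s hsIcc
      have hakM : a k ∈ Set.Icc (-M) M := hak_mem (a k) ⟨le_refl _, hak.le⟩
      have hmem1 : (t, s) ∈ K := ⟨htK, hsM⟩
      have hmem2 : (t, a k) ∈ K := ⟨htK, hakM⟩
      have hdist : dist (t, s) (t, a k) < δ := by
        rw [Prod.dist_eq]
        simp only [dist_self]
        apply max_lt (lt_of_le_of_lt (by norm_num) hδ0)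
        rw [Real.dist_eq]
        have : |s - a k| ≤ step := by
          rw [abs_of_nonneg (by linarith [hs.1.le])]
          have := hs.2
          rw [← hastep k] at *
          linarith
        exact lt_of_le_of_lt this hstepδ
      have := hδ _ hmem1 _ hmem2 hdist
      rw [Real.dist_eq] at this
      have hGeq : φn s * σ (t - s) = G (t, s) := rfl
      rw [hGeq, Real.norm_eq_abs]
      exact this.le
    rw [hastep] at this
    rw [abs_of_pos hstep0] at this
    calc |∫ s in (a k)..(a (k+1)), (φn s * σ (t-s) - G (t, a k))| ≤ ε' * step := this
      _ = step * ε' := mul_comm _ _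
  calc |∑ k ∈ range m, ((∫ s in (a k)..(a (k+1)), φn s * σ (t-s)) - step * G (t, a k))|
      ≤ ∑ k ∈ range m, |(∫ s in (a k)..(a (k+1)), φn s * σ (t-s)) - step * G (t, a k)| :=
        Finset.abs_sum_le_sum_abs _ _
    _ ≤ ∑ _k ∈ range m, step * ε' := Finset.sum_le_sum hbound
    _ = m * (step * ε') := by rw [Finset.sum_const, card_range, nsmul_eq_mul]
    _ = 2 * M * ε' := by rw [hstep]; field_simp
    _ ≤ ε := by
        rw [hε']
        have : (2*M)/(2*M+1) ≤ 1 := by rw [div_le_one (by linarith)]; linarith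
        calc 2*M*(ε/(2*M+1)) = ((2*M)/(2*M+1))*ε := by ring
          _ ≤ 1*ε := mul_le_mul_of_nonneg_right this hε.le
          _ = ε := one_mul ε

theorem list_prod_nonneg (l : List ℝ) (h : ∀ a ∈ l, 0 ≤ a) : 0 ≤ l.prod := by
  induction l with
  | nil => simp
  | cons a l ih =>
    rw [List.prod_cons]
    exact mul_nonneg (h a (by simp)) (ih fun b hb => h b (List.mem_cons_of_mem a hb))

theorem prod_dot_bound {n : ℕ} {C : ℝ} (hC : 0 ≤ C) (L : List (Fin n → ℝ)) (x : Fin n → ℝ)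
    (hx : ∀ i, |x i| ≤ C) :
    |(L.map fun v => v ⬝ᵥ x).prod| ≤ (L.map fun v => (∑ i, |v i|) * C).prod := by
  induction L with
  | nil => simp
  | cons v L ih =>
    rw [List.map_cons, List.prod_cons, List.map_cons, List.prod_cons, abs_mul]
    apply mul_le_mul (dot_bound v x hx hC) ih (abs_nonneg _)
    positivity

theorem taylor1 {F F' : ℝ → ℝ} (hF : ∀ u, HasDerivAt F (F' u) u) {a d ω : ℝ}
    (hb : ∀ u ∈ Set.uIcc a (a+d), |F' u - F' a| ≤ ω) :
    |F (a+d) - F a - d * F' a| ≤ ω * |d| := by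
  set s := Set.uIcc a (a+d) with hs
  have hg : ∀ u ∈ s, HasDerivWithinAt (fun u => F u - u * F' a) (F' u - F' a) s u := by
    intro u _
    have h := ((hF u).sub ((hasDerivAt_id u).mul_const (F' a))).hasDerivWithinAt (s := s)
    rw [one_mul] at h; exact h
  have := (convex_uIcc a (a+d)).norm_image_sub_le_of_norm_hasDerivWithin_le hg
    (fun u hu => by rw [Real.norm_eq_abs]; exact hb u hu)
    (Set.left_mem_uIcc (a := a) (b := a+d))
    (Set.right_mem_uIcc (a := a) (b := a+d))
  have heq : F (a+d) - (a+d) * F' a - (F a - a * F' a) = F (a+d) - F a - d * F' a := by ring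
  rw [Real.norm_eq_abs, Real.norm_eq_abs] at this
  calc |F (a+d) - F a - d * F' a| = |F (a+d) - (a+d) * F' a - (F a - a * F' a)| := by rw [heq]
    _ ≤ ω * |a + d - a| := this
    _ = ω * |d| := by congr 1; congr 1; ring

theorem bound_aux {Q δ η' η BvC dd q X : ℝ} (hQ0 : 0 ≤ Q) (hδ0 : 0 < δ) (hBC : 0 ≤ BvC)
    (hη : 0 < η) (hη'e : η' = η/(Q*BvC+1)) (hdd : |dd| ≤ δ*BvC) (hq : |q| ≤ Q)
    (hX : |X| ≤ η' * |dd|) : |-(q/δ) * X| ≤ η := by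
  have hη'0 : 0 < η' := by rw [hη'e]; positivity
  have h1 : |-(q/δ) * X| = (|q|/δ) * |X| := by
    rw [abs_mul, abs_neg, abs_div, abs_of_pos hδ0]
  rw [h1]
  have h2 : (|q|/δ) * |X| ≤ (Q/δ) * (η' * (δ*BvC)) := by
    apply mul_le_mul (by gcongr) (hX.trans (by gcongr)) (abs_nonneg _) (by positivity)
  have h3 : (Q/δ) * (η' * (δ*BvC)) = Q*BvC*η' := by field_simp
  rw [h3] at h2
  have h4 : Q*BvC*η' ≤ η := by
    rw [hη'e]
    have h0 : 0 ≤ Q*BvC := mul_nonneg hQ0 hBC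
    have hle : Q*BvC/(Q*BvC+1) ≤ 1 := by rw [div_le_one (by positivity)]; linarith
    calc Q*BvC * (η/(Q*BvC+1)) = (Q*BvC/(Q*BvC+1)) * η := by ring
      _ ≤ 1 * η := mul_le_mul_of_nonneg_right hle hη.le
      _ = η := one_mul η
  linarith


theorem approx_prod_deriv {n : ℕ} {Ω : Set (Fin n → ℝ)} (σ : ℝ → ℝ) (hΩ : IsCompact Ω)
    {h : ℝ → ℝ} (hh : ContDiff ℝ (⊤:ℕ∞) h)
    (hbase : ∀ (w : Fin n → ℝ) (b : ℝ), Approx σ Ω (fun x => h (w ⬝ᵥ x + b))) :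
    ∀ (L : List (Fin n → ℝ)) (w : Fin n → ℝ) (b : ℝ),
      Approx σ Ω (fun x => ((L.map fun v => v ⬝ᵥ x).prod) *
        iteratedDeriv L.length h (w ⬝ᵥ x + b)) := by
  have hsm : ∀ m : ℕ, ContDiff ℝ (⊤:ℕ∞) (iteratedDeriv m h) := by
    intro m
    rw [iteratedDeriv_eq_iterate]
    exact hh.iterate_deriv m
  have hda : ∀ (m : ℕ) u, HasDerivAt (iteratedDeriv m h) (iteratedDeriv (m+1) h u) u := by
    intro m u
    rw [iteratedDeriv_succ]
    exact (((hsm m).differentiable (by simp)) u).hasDerivAt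
  intro L
  induction L with
  | nil =>
    intro w b
    apply approx_congr (hbase w b)
    intro x _
    simp
  | cons v L ih =>
    intro w b
    apply approx_of_close
    intro η hη
    obtain ⟨C, hC0, hC⟩ := exists_coord_bound hΩ
    set k := L.length with hk
    set Bv : ℝ := ∑ i, |v i| with hBv
    have hBv0 : 0 ≤ Bv := Finset.sum_nonneg fun i _ => abs_nonneg _
    set Bw : ℝ := ∑ i, |w i| with hBw
    have hBw0 : 0 ≤ Bw := Finset.sum_nonneg fun i _ => abs_nonneg _
    set R : ℝ := Bw * C + |b| with hR
    have hR0 : 0 ≤ R := by positivity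
    set Q : ℝ := (L.map fun u => (∑ i, |u i|) * C).prod with hQ
    have hQ0 : 0 ≤ Q := by
      apply list_prod_nonneg
      intro a ha
      obtain ⟨u, _, rfl⟩ := List.mem_map.mp ha
      positivity
    set J : Set ℝ := Set.Icc (-(R + Bv*C + 1)) (R + Bv*C + 1) with hJ
    have hJc : IsCompact J := isCompact_Icc
    have huc := hJc.uniformContinuousOn_of_continuous
      ((hsm (k+1)).continuous.continuousOn (s := J))
    rw [Metric.uniformContinuousOn_iff] at huc
    set η' : ℝ := η / (Q*(Bv*C) + 1) with hη'
    have hη'0 : 0 < η' := by positivity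
    obtain ⟨δ₀, hδ₀0, hδ₀⟩ := huc η' hη'0
    set δ : ℝ := min 1 (δ₀/(Bv*C+1)) with hδ
    have hδ0 : 0 < δ := lt_min one_pos (by positivity)
    have hδ1 : δ ≤ 1 := min_le_left _ _
    have hδ2 : δ * (Bv*C) < δ₀ := by
      have h1 : δ ≤ δ₀/(Bv*C+1) := min_le_right _ _
      have h2 : 0 ≤ Bv * C := by positivity
      have h3 : δ * (Bv*C) ≤ δ₀/(Bv*C+1) * (Bv*C) := mul_le_mul_of_nonneg_right h1 h2
      have h4 : δ₀/(Bv*C+1) * (Bv*C) < δ₀ := by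
        rw [div_mul_eq_mul_div, div_lt_iff₀ (by positivity)]
        nlinarith
      linarith
    refine ⟨fun x => (1/δ) * ((L.map fun u => u ⬝ᵥ x).prod * iteratedDeriv k h ((w + δ•v) ⬝ᵥ x + b)
      - (L.map fun u => u ⬝ᵥ x).prod * iteratedDeriv k h (w ⬝ᵥ x + b)), ?_, ?_⟩
    · have hA := approx_smul (1/δ) (approx_add (ih (w + δ•v) b) (approx_smul (-1) (ih w b)))
      apply approx_congr hA
      intro x _
      ring
    · intro x hx
      set q : ℝ := (L.map fun u => u ⬝ᵥ x).prod with hq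
      set a : ℝ := w ⬝ᵥ x + b with haa
      set d : ℝ := δ * (v ⬝ᵥ x) with hd
      have hwd : (w + δ•v) ⬝ᵥ x + b = a + d := by
        rw [add_dotProduct, smul_dotProduct, smul_eq_mul]
        ring
      have hqQ : |q| ≤ Q := prod_dot_bound hC0 L x (hC x hx)
      have hvB : |v ⬝ᵥ x| ≤ Bv * C := dot_bound v x (hC x hx) hC0
      have haR : |a| ≤ R := by
        rw [haa]
        calc |w ⬝ᵥ x + b| ≤ |w ⬝ᵥ x| + |b| := abs_add_le _ _
          _ ≤ Bw * C + |b| := by linarith [dot_bound w x (hC x hx) hC0]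
      have hdB : |d| ≤ δ * (Bv * C) := by
        rw [hd, abs_mul, abs_of_pos hδ0]
        exact mul_le_mul_of_nonneg_left hvB hδ0.le
      have hBC : 0 ≤ Bv * C := mul_nonneg hBv0 hC0
      have haJ : a ∈ J := by
        rw [hJ, Set.mem_Icc]
        obtain ⟨h1, h2⟩ := abs_le.mp haR
        constructor <;> linarith
      have hdBC : |d| ≤ Bv * C := by
        have : δ * (Bv*C) ≤ 1 * (Bv*C) := mul_le_mul_of_nonneg_right hδ1 hBC
        linarith
      have hadJ : a + d ∈ J := by
        rw [hJ, Set.mem_Icc]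
        obtain ⟨h1, h2⟩ := abs_le.mp haR
        obtain ⟨h4, h5⟩ := abs_le.mp hdBC
        constructor <;> linarith
      have hsub : Set.uIcc a (a+d) ⊆ J := Set.uIcc_subset_Icc haJ hadJ
      have htay : |iteratedDeriv k h (a+d) - iteratedDeriv k h a - d * iteratedDeriv (k+1) h a|
          ≤ η' * |d| := by
        apply taylor1 (hda k)
        intro u hu
        have huJ : u ∈ J := hsub hu
        have hud : |u - a| ≤ |d| := by
          rcases Set.mem_uIcc.mp hu with ⟨h1, h2⟩ | ⟨h1, h2⟩
          · rw [abs_le]; constructor <;> [linarith [abs_nonneg d]; linarith [le_abs_self d]]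
          · rw [abs_le]; constructor <;> [linarith [neg_abs_le d]; linarith [abs_nonneg d]]
        have hdist : dist u a < δ₀ := by
          rw [Real.dist_eq]
          linarith
        have := hδ₀ u huJ a haJ hdist
        rw [Real.dist_eq] at this
        exact this.le
      have hshape : (fun x => ((List.cons v L).map fun u => u ⬝ᵥ x).prod *
          iteratedDeriv (List.cons v L).length h (w ⬝ᵥ x + b)) x
          - (1/δ) * (q * iteratedDeriv k h ((w + δ•v) ⬝ᵥ x + b) - q * iteratedDeriv k h (w ⬝ᵥ x + b))
          = -(q/δ) * (iteratedDeriv k h (a+d) - iteratedDeriv k h a - d * iteratedDeriv (k+1) h a) := by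
        rw [hwd]
        simp only [List.map_cons, List.prod_cons, List.length_cons, ← hq, ← haa, ← hk]
        have hvd : v ⬝ᵥ x = d / δ := by rw [hd]; field_simp
        rw [hvd]
        field_simp
        ring
      rw [hshape]
      exact bound_aux hQ0 hδ0 hBC hη rfl hdB hqQ htay

theorem sigma_poly_on_Icc (σ : ℝ → ℝ) (hσc : Continuous σ) {k : ℕ}
    (hcon : ∀ (φ : ContDiffBump (0:ℝ)) (b : ℝ), iteratedDeriv k (convB σ φ) b = 0)
    {R : ℝ} (hR : 0 < R) :
    ∃ c : Fin k → ℝ, ∀ t ∈ Set.Icc (-R) R, σ t = ∑ i : Fin k, c i * t ^ (i:ℕ) := by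
  have hcs : CompactSpace (Set.Icc (-R) R) := isCompact_iff_compactSpace.mp isCompact_Icc
  set X := Set.Icc (-R) R with hX
  set mon : Fin k → C(X, ℝ) := fun i =>
    ⟨fun t => (t:ℝ) ^ (i:ℕ), by fun_prop⟩ with hmon
  set V : Submodule ℝ C(X, ℝ) := Submodule.span ℝ (Set.range mon) with hV
  have hfd : FiniteDimensional ℝ V := FiniteDimensional.span_of_finite ℝ (Set.finite_range mon)
  have hclosed : IsClosed (V : Set C(X, ℝ)) := Submodule.closed_of_finiteDimensional V
  set σ' : C(X, ℝ) := ⟨fun t => σ (t:ℝ), by fun_prop⟩ with hσ'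
  have hmem : σ' ∈ closure (V : Set C(X, ℝ)) := by
    rw [Metric.mem_closure_iff]
    intro ε hε
    obtain ⟨φ, hφ⟩ := convB_close σ hσc hR (half_pos hε)
    obtain ⟨c, hc⟩ := poly_of_iteratedDeriv_zero k _ (convB_contDiff σ hσc φ) (hcon φ)
    set y : C(X, ℝ) := ∑ i : Fin k, c i • mon i with hy
    have hyV : y ∈ (V : Set C(X, ℝ)) := by
      apply Submodule.sum_mem
      intro i _
      exact Submodule.smul_mem _ _ (Submodule.subset_span (Set.mem_range_self i))
    refine ⟨y, hyV, ?_⟩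
    have hdle : dist σ' y ≤ ε/2 := by
      rw [ContinuousMap.dist_le (half_pos hε).le]
      intro t
      have h1 : y t = ∑ i ∈ Finset.range k, c i * (t:ℝ)^i := by
        rw [hy]
        simp only [ContinuousMap.sum_apply, ContinuousMap.smul_apply, smul_eq_mul]
        rw [← Fin.sum_univ_eq_sum_range (fun i => c i * (t:ℝ)^i) k]
        rfl
      rw [Real.dist_eq, hσ']
      have h2 := hφ (t:ℝ) t.2
      rw [hc (t:ℝ)] at h2
      simp only [ContinuousMap.coe_mk]
      rw [h1]
      rw [abs_sub_comm] at h2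
      exact h2
    linarith [half_lt_self hε]
  rw [hclosed.closure_eq] at hmem
  have hmem' : σ' ∈ V := hmem
  rw [hV, Submodule.mem_span_range_iff_exists_fun] at hmem'
  obtain ⟨c, hc⟩ := hmem'
  refine ⟨c, fun t ht => ?_⟩
  have := congrArg (fun g : C(X,ℝ) => g ⟨t, ht⟩) hc
  simp only [ContinuousMap.sum_apply, ContinuousMap.smul_apply, smul_eq_mul] at this
  rw [hσ'] at this
  simpa [hmon] using this.symm

theorem exists_nonzero_deriv (σ : ℝ → ℝ) (hσc : Continuous σ)
    (hσpoly : ¬ ∃ P : Polynomial ℝ, ∀ x : ℝ, σ x = P.eval x) (k : ℕ) :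
    ∃ (φ : ContDiffBump (0:ℝ)) (b : ℝ), iteratedDeriv k (convB σ φ) b ≠ 0 := by
  by_contra hcon
  push_neg at hcon
  apply hσpoly
  have key : ∀ N : ℕ, ∃ c : Fin k → ℝ, ∀ t ∈ Set.Icc (-((N:ℝ)+1)) ((N:ℝ)+1),
      σ t = ∑ i : Fin k, c i * t ^ (i:ℕ) := by
    intro N
    exact sigma_poly_on_Icc σ hσc hcon (by positivity)
  choose c hc using key
  set P : ℕ → Polynomial ℝ := fun N => ∑ i : Fin k, Polynomial.C (c N i) * Polynomial.X ^ (i:ℕ)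
    with hP
  have hPeval : ∀ N t, (P N).eval t = ∑ i : Fin k, c N i * t ^ (i:ℕ) := by
    intro N t
    rw [hP]
    simp [Polynomial.eval_finset_sum]
  have hagree : ∀ (N : ℕ) t, |t| ≤ (N:ℝ)+1 → σ t = (P N).eval t := by
    intro N t hT
    rw [hPeval]
    apply hc N t
    obtain ⟨h1, h2⟩ := abs_le.mp hT
    exact ⟨h1, h2⟩
  have hPeq : ∀ N, P N = P 0 := by
    intro N
    apply Polynomial.eq_of_infinite_eval_eq
    apply Set.Infinite.mono (s := Set.Icc (-1:ℝ) 1)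
    · intro x hx
      obtain ⟨h1, h2⟩ := hx
      have hx1 : |x| ≤ 1 := abs_le.mpr ⟨h1, h2⟩
      have e1 : σ x = (P N).eval x := hagree N x (by push_cast; linarith [Nat.cast_nonneg (α := ℝ) N])
      have e2 : σ x = (P 0).eval x := hagree 0 x (by norm_num; linarith)
      simp only [Set.mem_setOf_eq]
      rw [← e1, ← e2]
    · exact Set.Icc_infinite (show (-1:ℝ) < 1 by norm_num)
  refine ⟨P 0, fun x => ?_⟩
  obtain ⟨N, hN⟩ := exists_nat_ge |x|
  rw [← hPeq N]
  exact hagree N x (by linarith)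

theorem approx_zero (σ : ℝ → ℝ) (Ω : Set (Fin n → ℝ)) : Approx σ Ω (fun _ => 0) := by
  intro ε hε
  refine ⟨[], fun x _ => ?_⟩
  simp [NetSum]
  exact hε.le

theorem approx_finset_sum {σ : ℝ → ℝ} {Ω : Set (Fin n → ℝ)} {ι : Type*} (s : Finset ι)
    (F : ι → (Fin n → ℝ) → ℝ) (h : ∀ i ∈ s, Approx σ Ω (F i)) :
    Approx σ Ω (fun x => ∑ i ∈ s, F i x) := by
  classical
  induction s using Finset.induction_on with
  | empty => exact approx_congr (approx_zero σ Ω) (fun x _ => by simp)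
  | insert a s hnot ih =>
    have h1 := h a (Finset.mem_insert_self a s)
    have h2 := ih (fun i hi => h i (Finset.mem_insert_of_mem hi))
    apply approx_congr (approx_add h1 h2)
    intro x _
    rw [Finset.sum_insert hnot]

theorem monomial_list_prod (d : Fin n → ℕ) (x : Fin n → ℝ) :
    ((((List.finRange n).flatMap fun i => List.replicate (d i) (Pi.single i (1:ℝ)))).map
      fun v => v ⬝ᵥ x).prod = ∏ i, x i ^ d i := by
  rw [Fin.prod_univ_def]
  induction (List.finRange n) with
  | nil => simp
  | cons i l ih =>
    have hc : ((i :: l).flatMap fun i => List.replicate (d i) (Pi.single i (1:ℝ)))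
        = List.replicate (d i) (Pi.single i (1:ℝ)) ++ (l.flatMap fun i => List.replicate (d i) (Pi.single i (1:ℝ))) := rfl
    rw [hc, List.map_append, List.prod_append, ih, List.map_cons, List.prod_cons,
        List.map_replicate, List.prod_replicate, single_dotProduct, one_mul]

theorem approx_monomial {σ : ℝ → ℝ} {Ω : Set (Fin n → ℝ)} (hσc : Continuous σ)
    (hσpoly : ¬ ∃ P : Polynomial ℝ, ∀ x : ℝ, σ x = P.eval x) (hΩ : IsCompact Ω)
    (d : Fin n → ℕ) : Approx σ Ω (fun x => ∏ i, x i ^ d i) := by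
  set L : List (Fin n → ℝ) := (List.finRange n).flatMap fun i => List.replicate (d i) (Pi.single i (1:ℝ)) with hL
  obtain ⟨φ, b, hb⟩ := exists_nonzero_deriv σ hσc hσpoly L.length
  have hsm := convB_contDiff σ hσc φ
  have hbase : ∀ (w : Fin n → ℝ) (c : ℝ), Approx σ Ω (fun x => convB σ φ (w ⬝ᵥ x + c)) :=
    fun w c => approx_convB σ hσc hΩ φ w c
  have h1 := approx_prod_deriv σ hΩ hsm hbase L 0 b
  set e : ℝ := iteratedDeriv L.length (convB σ φ) b with he
  have h2 := approx_smul e⁻¹ h1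
  apply approx_congr h2
  intro x _
  have h3 : (0 : Fin n → ℝ) ⬝ᵥ x + b = b := by rw [zero_dotProduct, zero_add]
  rw [h3, ← he, monomial_list_prod d x]
  field_simp

theorem approx_mvpoly {σ : ℝ → ℝ} {Ω : Set (Fin n → ℝ)} (hσc : Continuous σ)
    (hσpoly : ¬ ∃ P : Polynomial ℝ, ∀ x : ℝ, σ x = P.eval x) (hΩ : IsCompact Ω)
    (p : MvPolynomial (Fin n) ℝ) : Approx σ Ω (fun x => MvPolynomial.eval x p) := by
  have heq : ∀ x : Fin n → ℝ, MvPolynomial.eval x p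
      = ∑ d ∈ p.support, p.coeff d * ∏ i, x i ^ d i := fun x => MvPolynomial.eval_eq' x p
  apply approx_congr _ (fun x _ => (heq x).symm)
  apply approx_finset_sum
  intro d _
  exact approx_smul _ (approx_monomial hσc hσpoly hΩ (fun i => d i))

theorem scalar_UAP {σ : ℝ → ℝ} {Ω : Set (Fin n → ℝ)} (hσc : Continuous σ)
    (hσpoly : ¬ ∃ P : Polynomial ℝ, ∀ x : ℝ, σ x = P.eval x) (hΩ : IsCompact Ω)
    {g : (Fin n → ℝ) → ℝ} (hg : ContinuousOn g Ω) : Approx σ Ω g := by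
  haveI : CompactSpace ↥Ω := isCompact_iff_compactSpace.mp hΩ
  set coords : Fin n → C(↥Ω, ℝ) := fun i => ⟨fun x => (x : Fin n → ℝ) i, ((continuous_apply i).comp continuous_subtype_val)⟩ with hcoords
  set A : Subalgebra ℝ C(↥Ω, ℝ) := Algebra.adjoin ℝ (Set.range coords) with hA
  have hsep : A.SeparatesPoints := by
    intro x y hxy
    have : (x : Fin n → ℝ) ≠ (y : Fin n → ℝ) := Subtype.coe_injective.ne hxy
    obtain ⟨i, hi⟩ := Function.ne_iff.mp this
    exact ⟨coords i, ⟨coords i, Algebra.subset_adjoin (Set.mem_range_self i), rfl⟩, hi⟩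
  have htop := ContinuousMap.subalgebra_topologicalClosure_eq_top_of_separatesPoints A hsep
  set g' : C(↥Ω, ℝ) := ⟨Set.restrict Ω g, hg.restrict⟩ with hg'
  have hmemc : g' ∈ closure (A : Set C(↥Ω, ℝ)) := by
    have : g' ∈ A.topologicalClosure := htop ▸ Algebra.mem_top
    exact this
  have hpoly : ∀ p ∈ A, ∃ q : MvPolynomial (Fin n) ℝ,
      ∀ x : ↥Ω, p x = MvPolynomial.eval (x : Fin n → ℝ) q := by
    intro p hp
    rw [hA] at hp
    induction hp using Algebra.adjoin_induction with
    | mem f hf =>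
      obtain ⟨i, rfl⟩ := hf
      exact ⟨MvPolynomial.X i, fun x => by simp [hcoords]⟩
    | algebraMap r =>
      exact ⟨MvPolynomial.C r, fun x => by simp⟩
    | add f₁ f₂ h₁ h₂ ih₁ ih₂ =>
      obtain ⟨q₁, hq₁⟩ := ih₁
      obtain ⟨q₂, hq₂⟩ := ih₂
      exact ⟨q₁ + q₂, fun x => by simp [hq₁ x, hq₂ x]⟩
    | mul f₁ f₂ h₁ h₂ ih₁ ih₂ =>
      obtain ⟨q₁, hq₁⟩ := ih₁
      obtain ⟨q₂, hq₂⟩ := ih₂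
      exact ⟨q₁ * q₂, fun x => by simp [hq₁ x, hq₂ x]⟩
  apply approx_of_close
  intro η hη
  rw [Metric.mem_closure_iff] at hmemc
  obtain ⟨p, hpA, hdist⟩ := hmemc η hη
  obtain ⟨q, hq⟩ := hpoly p hpA
  refine ⟨fun x => MvPolynomial.eval x q, approx_mvpoly hσc hσpoly hΩ q, fun x hx => ?_⟩
  have h1 : g x = g' ⟨x, hx⟩ := rfl
  have h2 : MvPolynomial.eval x q = p ⟨x, hx⟩ := (hq ⟨x, hx⟩).symm
  show |g x - MvPolynomial.eval x q| ≤ η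
  rw [h1, h2, ← Real.dist_eq]
  exact (ContinuousMap.dist_apply_le_dist _).trans hdist.le

theorem sum_range_getD {α β : Type*} [AddCommMonoid β] (l : List α) (junk : α) (F : α → β) :
    ∑ j ∈ Finset.range l.length, F (l.getD j junk) = (l.map F).sum := by
  induction l with
  | nil => simp
  | cons a l ih =>
    rw [List.length_cons, Finset.sum_range_succ', List.map_cons, List.sum_cons]
    simp only [List.getD_cons_succ, List.getD_cons_zero]
    rw [ih, add_comm]

theorem map_sum_bind {α β γ : Type*} [AddCommMonoid γ] (l : List α) (g : α → List β) (F : β → γ) :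
    (((l.flatMap g)).map F).sum = (l.map fun a => ((g a).map F).sum).sum := by
  induction l with
  | nil => simp
  | cons a l ih =>
    have hc : (a :: l).flatMap g = g a ++ l.flatMap g := rfl
    rw [hc, List.map_append, List.sum_append, ih, List.map_cons, List.sum_cons]

end UAPAux

/-- UAP of one-hidden-layer sums `g(x) = Σ_j A_j σ(W_j x + b_j)` with matrix coefficients:
for continuous non-polynomial `σ`, any continuous `f : Ω → ℝⁿ` on a compact `Ω ⊂ ℝⁿ`
can be approximated uniformly within `ε`. -/
theorem matrix_shallow_UAP {n : ℕ} (σ : ℝ → ℝ) (hσc : Continuous σ)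
    (hσpoly : ¬ ∃ P : Polynomial ℝ, ∀ x : ℝ, σ x = P.eval x)
    (Ω : Set (Fin n → ℝ)) (hΩ : IsCompact Ω)
    (f : (Fin n → ℝ) → (Fin n → ℝ)) (hf : ContinuousOn f Ω)
    (ε : ℝ) (hε : 0 < ε) :
    ∃ (N : ℕ) (A W : ℕ → Matrix (Fin n) (Fin n) ℝ) (b : ℕ → (Fin n → ℝ)),
      ∀ x ∈ Ω,
        euclNorm (f x - ∑ j ∈ Finset.range N, (A j).mulVec (entApp σ ((W j).mulVec x + b j)))
          ≤ ε := by
  rcases Nat.eq_zero_or_pos n with hn | hn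
  · subst hn
    refine ⟨0, fun _ => 0, fun _ => 0, fun _ => 0, fun x _ => ?_⟩
    have h0 : euclNorm (f x - ∑ j ∈ Finset.range 0,
        ((fun _ => (0 : Matrix (Fin 0) (Fin 0) ℝ)) j).mulVec
          (entApp σ (((fun _ => (0 : Matrix (Fin 0) (Fin 0) ℝ)) j).mulVec x
            + (fun _ => (0 : Fin 0 → ℝ)) j))) = 0 := by
      rw [euclNorm]
      simp
    rw [h0]
    exact hε.le
  set ε' : ℝ := ε / (n+1) with hε'
  have hε'0 : 0 < ε' := by positivity
  have happ : ∀ i : Fin n, ∃ L : List (ℝ × (Fin n → ℝ) × ℝ),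
      ∀ x ∈ Ω, |f x i - NetSum σ L x| ≤ ε' := by
    intro i
    have hfi : ContinuousOn (fun x => f x i) Ω := (continuous_apply i).comp_continuousOn hf
    exact scalar_UAP hσc hσpoly hΩ hfi ε' hε'0
  choose Li hLi using happ
  set T : List (Fin n × ℝ × (Fin n → ℝ) × ℝ) :=
    (List.finRange n).flatMap (fun i => (Li i).map fun t => (i, t)) with hT
  set junk : Fin n × ℝ × (Fin n → ℝ) × ℝ := (⟨0, hn⟩, 0, 0, 0) with hjunk
  set Amk : (Fin n × ℝ × (Fin n → ℝ) × ℝ) → Matrix (Fin n) (Fin n) ℝ :=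
    fun τ => Matrix.of fun r s => if r = τ.1 ∧ s = τ.1 then τ.2.1 else 0 with hAmk
  set Wmk : (Fin n × ℝ × (Fin n → ℝ) × ℝ) → Matrix (Fin n) (Fin n) ℝ :=
    fun τ => Matrix.of fun _ s => τ.2.2.1 s with hWmk
  set bmk : (Fin n × ℝ × (Fin n → ℝ) × ℝ) → (Fin n → ℝ) :=
    fun τ => fun _ => τ.2.2.2 with hbmk
  refine ⟨T.length, fun j => Amk (T.getD j junk), fun j => Wmk (T.getD j junk),
    fun j => bmk (T.getD j junk), fun x hx => ?_⟩
  have hterm : ∀ (τ : Fin n × ℝ × (Fin n → ℝ) × ℝ) (r : Fin n),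
      (Amk τ).mulVec (entApp σ ((Wmk τ).mulVec x + bmk τ)) r
        = if r = τ.1 then τ.2.1 * σ (τ.2.2.1 ⬝ᵥ x + τ.2.2.2) else 0 := by
    intro τ r
    have hv : ∀ s, entApp σ ((Wmk τ).mulVec x + bmk τ) s = σ (τ.2.2.1 ⬝ᵥ x + τ.2.2.2) := by
      intro s
      rfl
    have hmv : (Amk τ).mulVec (entApp σ ((Wmk τ).mulVec x + bmk τ)) r
        = ∑ s, (if r = τ.1 ∧ s = τ.1 then τ.2.1 else 0)
            * entApp σ ((Wmk τ).mulVec x + bmk τ) s := rfl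
    rw [hmv]
    by_cases hr : r = τ.1
    · have heach : ∀ s, (if r = τ.1 ∧ s = τ.1 then τ.2.1 else 0)
          * entApp σ ((Wmk τ).mulVec x + bmk τ) s
          = if s = τ.1 then τ.2.1 * entApp σ ((Wmk τ).mulVec x + bmk τ) s else 0 := by
        intro s
        by_cases hs : s = τ.1 <;> simp [hr, hs]
      rw [Finset.sum_congr rfl (fun s _ => heach s), Finset.sum_ite_eq' Finset.univ τ.1]
      simp [hr, hv]
    · have heach : ∀ s, (if r = τ.1 ∧ s = τ.1 then τ.2.1 else 0)
          * entApp σ ((Wmk τ).mulVec x + bmk τ) s = 0 := by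
        intro s
        simp [hr]
      rw [Finset.sum_congr rfl (fun s _ => heach s)]
      simp [hr]
  have hcomp : ∀ r : Fin n,
      (∑ j ∈ Finset.range T.length,
        (Amk (T.getD j junk)).mulVec (entApp σ ((Wmk (T.getD j junk)).mulVec x
          + bmk (T.getD j junk)))) r = NetSum σ (Li r) x := by
    intro r
    rw [Finset.sum_apply]
    set F : (Fin n × ℝ × (Fin n → ℝ) × ℝ) → ℝ :=
      fun τ => if r = τ.1 then τ.2.1 * σ (τ.2.2.1 ⬝ᵥ x + τ.2.2.2) else 0 with hF
    have h1 : ∀ j ∈ Finset.range T.length,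
        (Amk (T.getD j junk)).mulVec (entApp σ ((Wmk (T.getD j junk)).mulVec x
          + bmk (T.getD j junk))) r = F (T.getD j junk) :=
      fun j _ => hterm _ r
    rw [Finset.sum_congr rfl h1, sum_range_getD T junk F, hT, map_sum_bind]
    have hinner : ∀ i : Fin n, (((Li i).map fun t => (i, t)).map F).sum
        = if r = i then NetSum σ (Li i) x else 0 := by
      intro i
      rw [List.map_map]
      by_cases hri : r = i
      · subst hri
        rw [if_pos rfl, NetSum]
        congr 1
        apply List.map_congr_left
        intro t _
        simp [hF, Function.comp]
      · have : ∀ t ∈ Li i, (F ∘ fun t => (i, t)) t = 0 := by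
          intro t _
          simp [hF, Function.comp, hri]
        rw [List.map_congr_left this]
        simp [hri]
    have h2 : ((List.finRange n).map fun i => (((Li i).map fun t => (i, t)).map F).sum).sum
        = ((List.finRange n).map fun i => if r = i then NetSum σ (Li i) x else 0).sum := by
      congr 1
      exact List.map_congr_left fun i _ => hinner i
    rw [h2, ← Fin.sum_univ_def, Finset.sum_ite_eq]
    simp
  have hcoord : ∀ r : Fin n,
      |(f x - ∑ j ∈ Finset.range T.length,
        (Amk (T.getD j junk)).mulVec (entApp σ ((Wmk (T.getD j junk)).mulVec x
          + bmk (T.getD j junk)))) r| ≤ ε' := by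
    intro r
    rw [Pi.sub_apply, hcomp r]
    exact hLi r x hx
  rw [euclNorm]
  have hsum : (∑ r, ((f x - ∑ j ∈ Finset.range T.length,
      (Amk (T.getD j junk)).mulVec (entApp σ ((Wmk (T.getD j junk)).mulVec x
        + bmk (T.getD j junk)))) r) ^ 2) ≤ (n : ℝ) * ε' ^ 2 := by
    calc (∑ r, ((f x - ∑ j ∈ Finset.range T.length,
        (Amk (T.getD j junk)).mulVec (entApp σ ((Wmk (T.getD j junk)).mulVec x
          + bmk (T.getD j junk)))) r) ^ 2) ≤ ∑ _r : Fin n, ε' ^ 2 := by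
          apply Finset.sum_le_sum
          intro r _
          rw [← sq_abs]
          exact pow_le_pow_left₀ (abs_nonneg _) (hcoord r) 2
      _ = (n : ℝ) * ε' ^ 2 := by rw [Finset.sum_const, Finset.card_univ, Fintype.card_fin, nsmul_eq_mul]
  have hfinal : (n : ℝ) * ε' ^ 2 ≤ ε ^ 2 := by
    rw [hε', div_pow]
    have hd : (n : ℝ) / ((n:ℝ)+1)^2 ≤ 1 := by
      rw [div_le_one (by positivity)]
      nlinarith [Nat.cast_nonneg (α := ℝ) n]
    calc (n:ℝ) * (ε^2 / ((n:ℝ)+1)^2) = ((n:ℝ) / ((n:ℝ)+1)^2) * ε^2 := by ring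
      _ ≤ 1 * ε^2 := mul_le_mul_of_nonneg_right hd (by positivity)
      _ = ε^2 := one_mul _
  calc Real.sqrt (∑ r, _) ≤ Real.sqrt ((n:ℝ) * ε' ^ 2) := Real.sqrt_le_sqrt hsum
    _ ≤ Real.sqrt (ε ^ 2) := Real.sqrt_le_sqrt hfinal
    _ = ε := Real.sqrt_sq hε.le
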